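/- Let a, b be positive real numbers and let (v₁, v₂, v₃, v₄) ∈ ℂ⁴ be a configuration of the linkage Q(a,b,a,b), i.e., |v₂−v₁| = |v₄−v₃| = a and |v₃−v₂| = |v₄−v₁| = b, which is not a parallelogram, i.e., v₁ + v₃ ≠ v₂ + v₄ (a counter-parallelogram configuration). Then R(V) = a²/b²; that is, the uniformizer is constant on the counter-parallelogram component, which collapses to the single point a²/b² on the positive real axis. -/

import Mathlib

/-- The uniformizer `R(V) = [v₁,v₃;v₂,v₄]` of a planar quadrilateral. -/
noncomputable def uniformizer (v₁ v₂ v₃ v₄ : ℂ) : ℂ :=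
  ((v₂ - v₁) / (v₂ - v₃)) * ((v₄ - v₃) / (v₄ - v₁))

theorem stmt_19 (a b : ℝ) (ha : 0 < a) (hb : 0 < b) (v₁ v₂ v₃ v₄ : ℂ)
    (h₁ : ‖v₂ - v₁‖ = a) (h₂ : ‖v₃ - v₂‖ = b)
    (h₃ : ‖v₄ - v₃‖ = a) (h₄ : ‖v₁ - v₄‖ = b)
    (hnp : v₁ + v₃ ≠ v₂ + v₄) :
    uniformizer v₁ v₂ v₃ v₄ = ((a ^ 2 / b ^ 2 : ℝ) : ℂ) := by
  have hb0 : (b : ℂ) ≠ 0 := by exact_mod_cast hb.ne'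
  have key : ∀ (z : ℂ) (c : ℝ), ‖z‖ = c → 0 < c →
      (starRingEnd ℂ) z = (c : ℂ) ^ 2 / z ∧ z ≠ 0 := by
    intro z c h hc
    have hz : z ≠ 0 := by
      intro h0; rw [h0, norm_zero] at h; exact hc.ne h
    refine ⟨?_, hz⟩
    rw [eq_div_iff hz, mul_comm, Complex.mul_conj, ← h, ← Complex.sq_norm]
    push_cast
    ring
  obtain ⟨c1, n1⟩ := key _ _ h₁ ha
  obtain ⟨c2, n2⟩ := key _ _ h₂ hb
  obtain ⟨c3, n3⟩ := key _ _ h₃ ha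
  obtain ⟨c4, n4⟩ := key _ _ h₄ hb
  have hsum : (starRingEnd ℂ) ((v₂ - v₁) + (v₄ - v₃)) =
      -((starRingEnd ℂ) ((v₃ - v₂) + (v₁ - v₄))) := by
    rw [← map_neg]
    congr 1
    ring
  rw [map_add, map_add, c1, c2, c3, c4] at hsum
  have hpr : (v₂ - v₁) + (v₄ - v₃) ≠ 0 := fun h => hnp (by linear_combination -h)
  have key2 : (a : ℂ) ^ 2 * ((v₃ - v₂) * (v₁ - v₄)) =
      (b : ℂ) ^ 2 * ((v₂ - v₁) * (v₄ - v₃)) := by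
    field_simp at hsum
    have h' : ((v₂ - v₁) + (v₄ - v₃)) *
        ((a : ℂ) ^ 2 * ((v₃ - v₂) * (v₁ - v₄)) -
          (b : ℂ) ^ 2 * ((v₂ - v₁) * (v₄ - v₃))) = 0 := by
      linear_combination hsum
    rcases mul_eq_zero.1 h' with h | h
    · exact absurd h hpr
    · linear_combination h
  have hv23 : v₂ - v₃ ≠ 0 := fun h => n2 (by linear_combination -h)
  have hv41 : v₄ - v₁ ≠ 0 := fun h => n4 (by linear_combination -h)
  unfold uniformizer
  push_cast
  field_simp
  linear_combination -key2
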